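/- arXiv:2005.07944 — 2 statements merged into one kernel-verified Lean document; each statement's English description precedes it below -/
import Mathlib

section
/- Fix m ∈ ℕ, n = ⌊m/2⌋, β ≥ 0. Let D_n ⊆ ℝ^{n+1} be the convex cone generated by the vectors v_0, …, v_n where (v_k)_i = C(m−2k, i−k). Then for every j ∈ ℕ, the vector w^{(j)} with entries w^{(j)}_i = (i(m−i))^j · C(m,i) (for 0 ≤ i ≤ n) lies in D_n. -/
/-- The generator vectors `v_k ∈ ℝ^{n+1}` with `(v_k)_i = C(m-2k, i-k)`
(zero when `i < k`). -/
noncomputable def vgen (m : ℕ) (k : ℕ) : Fin (m / 2 + 1) → ℝ :=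
  fun i => if k ≤ (i : ℕ) then ((m - 2 * k).choose ((i : ℕ) - k) : ℝ) else 0

/-- The convex cone `D_n ⊆ ℝ^{n+1}` generated by `v_0, …, v_n`: the set of
nonnegative linear combinations of the generators. -/
def inConeD (m : ℕ) (w : Fin (m / 2 + 1) → ℝ) : Prop :=
  ∃ c : Fin (m / 2 + 1) → ℝ, (∀ k, 0 ≤ c k) ∧ w = ∑ k, c k • vgen m (k : ℕ)

lemma key_nat (M t : ℕ) (h1 : 1 ≤ t) (h2 : t ≤ M) :
    t * (M - t) * M.choose t = M * (M - 1) * (M - 2).choose (t - 1) := by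
  rcases eq_or_lt_of_le h2 with rfl | hlt
  · rcases Nat.lt_or_ge t 2 with h | h
    · interval_cases t
      simp
    · have h0 : t - 2 < t - 1 := by omega
      simp [Nat.choose_eq_zero_of_lt h0]
  · have hM2 : 2 ≤ M := by omega
    have e1 : M * (M - 1).choose (t - 1) = M.choose t * t := by
      have := Nat.add_one_mul_choose_eq (M - 1) (t - 1)
      have hM : M - 1 + 1 = M := by omega
      have ht : t - 1 + 1 = t := by omega
      simpa [Nat.succ_eq_add_one, hM, ht] using this
    have e2 : (M - 1).choose (t - 1) * (M - t) = (M - 1).choose t * t := by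
      have := Nat.choose_succ_right_eq (M - 1) (t - 1)
      have ht : t - 1 + 1 = t := by omega
      have hs : M - 1 - (t - 1) = M - t := by omega
      rw [ht, hs] at this
      exact this.symm
    have e3 : (M - 1) * (M - 2).choose (t - 1) = (M - 1).choose t * t := by
      have := Nat.add_one_mul_choose_eq (M - 2) (t - 1)
      have hM : M - 2 + 1 = M - 1 := by omega
      have ht : t - 1 + 1 = t := by omega
      simpa [Nat.succ_eq_add_one, hM, ht] using this
    have key : M * (t * (M - t) * M.choose t) = M * (M * (M - 1) * (M - 2).choose (t - 1)) := by
      calc M * (t * (M - t) * M.choose t)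
          = (M.choose t * t) * (M * (M - t)) := by ring
        _ = (M * (M - 1).choose (t - 1)) * (M * (M - t)) := by rw [e1]
        _ = M * M * ((M - 1).choose (t - 1) * (M - t)) := by ring
        _ = M * M * ((M - 1).choose t * t) := by rw [e2]
        _ = M * M * ((M - 1) * (M - 2).choose (t - 1)) := by rw [e3]
        _ = M * (M * (M - 1) * (M - 2).choose (t - 1)) := by ring
    exact Nat.eq_of_mul_eq_mul_left (by omega) key

/-- The full nat recurrence for choose entries. -/
lemma rec_nat (m k i : ℕ) (hk : k ≤ m / 2) (hi : i ≤ m / 2) (hki : k < i) :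
    i * (m - i) * (m - 2 * k).choose (i - k)
      = (m - 2 * k) * (m - 2 * k - 1) * (m - 2 * (k + 1)).choose (i - (k + 1))
        + k * (m - k) * (m - 2 * k).choose (i - k) := by
  set M := m - 2 * k with hM
  set t := i - k with ht
  have h1 : 1 ≤ t := by omega
  have h2 : t ≤ M := by omega
  have hsplit : i * (m - i) = t * (M - t) + k * (m - k) := by
    zify [show i ≤ m by omega, show t ≤ M by omega, show k ≤ m by omega]
    have e1 : (t : ℤ) = i - k := by omega
    have e2 : (M : ℤ) = m - 2 * k := by omega
    rw [e1, e2]; ring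
  have hMM : m - 2 * (k + 1) = M - 2 := by omega
  have htt : i - (k + 1) = t - 1 := by omega
  rw [hMM, htt, hsplit, add_mul]
  rw [key_nat M t h1 h2]

/-- Entrywise recurrence over ℝ for the generators. -/
lemma rec_real (m k : ℕ) (hk : k ≤ m / 2) (i : Fin (m / 2 + 1)) :
    (((i : ℕ) * (m - (i : ℕ)) : ℕ) : ℝ) * vgen m k i
      = (((m - 2 * k) * (m - 2 * k - 1) : ℕ) : ℝ) * vgen m (k + 1) i
        + ((k * (m - k) : ℕ) : ℝ) * vgen m k i := by
  have hi : (i : ℕ) ≤ m / 2 := by omega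
  rcases Nat.lt_or_ge (i : ℕ) k with h | h
  · simp [vgen, if_neg (by omega : ¬ k ≤ (i : ℕ)), if_neg (by omega : ¬ k + 1 ≤ (i : ℕ))]
    exact fun h' => absurd h' (by omega)
  rcases eq_or_lt_of_le h with heq | hlt
  · simp only [vgen, if_pos h, if_neg (by omega : ¬ k + 1 ≤ (i : ℕ))]
    rw [← heq]
    push_cast
    ring
  · simp only [vgen, if_pos h, if_pos (by omega : k + 1 ≤ (i : ℕ))]
    have := rec_nat m k (i : ℕ) hk hi hlt
    exact_mod_cast this

/-- Pointwise evaluation of cone combinations as range sums. -/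
lemma sum_eval (m : ℕ) (d : ℕ → ℝ) (i : Fin (m / 2 + 1)) :
    (∑ k : Fin (m / 2 + 1), d (k : ℕ) • vgen m (k : ℕ)) i
      = ∑ k ∈ Finset.range (m / 2 + 1), d k * vgen m k i := by
  rw [Finset.sum_apply]
  rw [← Fin.sum_univ_eq_sum_range (fun k => d k * vgen m k i)]
  exact Finset.sum_congr rfl (fun k _ => rfl)

/-- The cone is closed under entrywise multiplication by `i(m-i)`. -/
lemma cone_mul (m : ℕ) (w : Fin (m / 2 + 1) → ℝ) (h : inConeD m w) :
    inConeD m (fun i => ((i : ℕ) * ((m : ℝ) - (i : ℕ))) * w i) := by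
  obtain ⟨c, hc, hw⟩ := h
  -- ℕ-indexed version of the coefficients
  set cn : ℕ → ℝ := fun k => if hk : k < m / 2 + 1 then c ⟨k, hk⟩ else 0 with hcn_def
  have hcn : ∀ k, 0 ≤ cn k := by
    intro k
    by_cases hk : k ≤ m / 2 <;> simp [hcn_def, hk, hc]
  have hcnk : ∀ k : Fin (m / 2 + 1), cn (k : ℕ) = c k := by
    intro k
    simp [hcn_def, k.isLt]
    exact fun h => absurd h (not_lt.mpr (Nat.le_of_lt_succ k.isLt))
  have hwi : ∀ i, w i = ∑ k ∈ Finset.range (m / 2 + 1), cn k * vgen m k i := by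
    intro i
    rw [hw, show (∑ k : Fin (m / 2 + 1), c k • vgen m (k : ℕ))
          = ∑ k : Fin (m / 2 + 1), cn (k : ℕ) • vgen m (k : ℕ) by
        exact Finset.sum_congr rfl (fun k _ => by rw [hcnk])]
    exact sum_eval m cn i
  -- new coefficients
  set c' : ℕ → ℝ := fun l =>
    ((l * (m - l) : ℕ) : ℝ) * cn l
      + (if l = 0 then 0
          else (((m - 2 * (l - 1)) * (m - 2 * (l - 1) - 1) : ℕ) : ℝ) * cn (l - 1)) with hc'_def
  have hc' : ∀ l, 0 ≤ c' l := by
    intro l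
    apply add_nonneg (mul_nonneg (Nat.cast_nonneg _) (hcn l))
    split
    · exact le_rfl
    · exact mul_nonneg (Nat.cast_nonneg _) (hcn _)
  refine ⟨fun l => c' (l : ℕ), fun l => hc' _, ?_⟩
  funext i
  rw [sum_eval m c' i]
  -- split the sum according to the two parts of c'
  have hsplit : ∑ l ∈ Finset.range (m / 2 + 1), c' l * vgen m l i
      = (∑ l ∈ Finset.range (m / 2 + 1), ((l * (m - l) : ℕ) : ℝ) * cn l * vgen m l i)
        + ∑ l ∈ Finset.range (m / 2 + 1),
            (if l = 0 then 0
              else (((m - 2 * (l - 1)) * (m - 2 * (l - 1) - 1) : ℕ) : ℝ) * cn (l - 1))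
              * vgen m l i := by
    rw [← Finset.sum_add_distrib]
    exact Finset.sum_congr rfl (fun l _ => by rw [hc'_def]; ring)
  -- shift the second sum
  have hshift : ∑ l ∈ Finset.range (m / 2 + 1),
        (if l = 0 then 0
          else (((m - 2 * (l - 1)) * (m - 2 * (l - 1) - 1) : ℕ) : ℝ) * cn (l - 1))
          * vgen m l i
      = ∑ k ∈ Finset.range (m / 2 + 1),
          (((m - 2 * k) * (m - 2 * k - 1) : ℕ) : ℝ) * cn k * vgen m (k + 1) i := by
    rw [Finset.sum_range_succ' _ (m / 2)]
    rw [Finset.sum_range_succ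
      (fun k => (((m - 2 * k) * (m - 2 * k - 1) : ℕ) : ℝ) * cn k * vgen m (k + 1) i) (m / 2)]
    have hz : (m - 2 * (m / 2)) * (m - 2 * (m / 2) - 1) = 0 := by
      have h1 : m - 2 * (m / 2) ≤ 1 := by omega
      interval_cases h : (m - 2 * (m / 2)) <;> simp
    simp only [hz, Nat.cast_zero, zero_mul, add_zero, if_neg (Nat.succ_ne_zero _),
      Nat.add_sub_cancel]
    simp
  rw [hsplit, hshift, ← Finset.sum_add_distrib]
  have hrw : ∀ k ∈ Finset.range (m / 2 + 1),
      ((k * (m - k) : ℕ) : ℝ) * cn k * vgen m k i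
        + (((m - 2 * k) * (m - 2 * k - 1) : ℕ) : ℝ) * cn k * vgen m (k + 1) i
      = cn k * ((((i : ℕ) * (m - (i : ℕ)) : ℕ) : ℝ) * vgen m k i) := by
    intro k hk
    rw [Finset.mem_range] at hk
    rw [rec_real m k (by omega) i]
    ring
  rw [Finset.sum_congr rfl hrw]
  have hcast : (((i : ℕ) * (m - (i : ℕ)) : ℕ) : ℝ) = (i : ℕ) * ((m : ℝ) - (i : ℕ)) := by
    have him : (i : ℕ) ≤ m := by omega
    push_cast [Nat.cast_sub him]
    ring
  rw [hwi i, Finset.mul_sum]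
  exact Finset.sum_congr rfl (fun k _ => by rw [hcast]; ring)

/-- for every `j ∈ ℕ`, the vector with entries `(i(m-i))^j · C(m,i)`
(`0 ≤ i ≤ n = ⌊m/2⌋`) lies in the cone `D_n`. -/
theorem stmt_10 (m : ℕ) (β : ℝ) (hβ : 0 ≤ β) (j : ℕ) :
    inConeD m (fun i => ((i : ℕ) * ((m : ℝ) - (i : ℕ))) ^ j * (m.choose (i : ℕ) : ℝ)) := by
  induction j with
  | zero =>
    refine ⟨fun k => if (k : ℕ) = 0 then 1 else 0, ?_, ?_⟩
    · intro k; by_cases h : (k : ℕ) = 0 <;> simp [h]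
    · funext i
      rw [Finset.sum_apply]
      simp only [Pi.smul_apply, smul_eq_mul, ite_mul, one_mul, zero_mul]
      rw [show (fun k : Fin (m / 2 + 1) => if (k : ℕ) = 0 then vgen m (k : ℕ) i else 0)
            = fun k : Fin (m / 2 + 1) => if k = 0 then vgen m (k : ℕ) i else 0 by
          funext k
          congr 1
          simp only [Fin.ext_iff, Fin.val_zero]]
      rw [Finset.sum_ite_eq' Finset.univ (0 : Fin (m / 2 + 1))
        (fun k => vgen m (k : ℕ) i)]
      simp [vgen]
  | succ j ih =>
    have heq : (fun i : Fin (m / 2 + 1) =>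
          ((i : ℕ) * ((m : ℝ) - (i : ℕ))) ^ (j + 1) * (m.choose (i : ℕ) : ℝ))
        = fun i : Fin (m / 2 + 1) => ((i : ℕ) * ((m : ℝ) - (i : ℕ)))
            * (((i : ℕ) * ((m : ℝ) - (i : ℕ))) ^ j * (m.choose (i : ℕ) : ℝ)) := by
      funext i; ring
    rw [heq]
    exact cone_mul m _ ih
end

section
/- Fix m ∈ ℕ, n = ⌊m/2⌋, and β ≥ 0. Let z ∈ ℝ^{n+1} have entries z_i = C(m,i)·exp(β·i·(m−i)). Then z lies in the closed convex cone generated by the vectors v_0, …, v_n, where (v_k)_i = C(m−2k, i−k). -/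
namespace Stmt11Aux

lemma lemL (n k : ℕ) : (n - k) * n.choose k = n * (n-1).choose k := by
  cases n with
  | zero => simp
  | succ s =>
    have h1 := Nat.choose_succ_right_eq (s+1) k
    have h2 := Nat.add_one_mul_choose_eq s k
    simp only [Nat.add_sub_cancel]
    rw [mul_comm, ← h1, ← h2]

/-- key nat identity: `t(a-t)C(a,t) = a(a-1)C(a-2,t-1)` for `t = r+1 ≥ 1`. -/
lemma lemK (a r : ℕ) : (r+1) * (a - (r+1)) * a.choose (r+1) = a * (a-1) * (a-2).choose r := by
  have h1 := Nat.choose_succ_right_eq a r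
  have h2 := lemL a r
  have h3 := lemL (a-1) r
  have key : (r+1) * (a - (r+1)) * a.choose (r+1) = (a - (r+1)) * (a.choose r * (a-r)) := by
    rw [← h1]; ring
  rw [key]
  have h5 : (a - (r+1)) * (a.choose r * (a-r)) = (a - (r+1)) * (a * (a-1).choose r) := by
    rw [mul_comm (a.choose r), h2]
  rw [h5]
  have h4 : a - (r+1) = a - 1 - r := by omega
  rw [h4]
  have h6 : a - 1 - 1 = a - 2 := by omega
  rw [h6] at h3
  calc (a-1-r) * (a * (a-1).choose r) = a * ((a-1-r) * (a-1).choose r) := by ring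
    _ = a * ((a-1) * (a-2).choose r) := by rw [h3]
    _ = a * (a-1) * (a-2).choose r := by ring

noncomputable def Ac (m k : ℕ) : ℝ := ((m - 2*k : ℕ) : ℝ) * (((m - 2*k : ℕ) : ℝ) - 1)
noncomputable def Bc (m k : ℕ) : ℝ := ((k * (m - k) : ℕ) : ℝ)

lemma Ac_nonneg (m k : ℕ) : 0 ≤ Ac m k := by
  unfold Ac
  rcases Nat.eq_zero_or_pos (m - 2*k) with h | h
  · simp [h]
  · have : (1:ℝ) ≤ ((m - 2*k : ℕ) : ℝ) := by exact_mod_cast h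
    nlinarith

lemma Bc_nonneg (m k : ℕ) : 0 ≤ Bc m k := by unfold Bc; positivity

lemma step (m k : ℕ) (i : Fin (m/2+1)) :
    ((i:ℕ):ℝ) * ((m:ℝ) - ((i:ℕ):ℝ)) * vgen m k i
      = Ac m k * vgen m (k+1) i + Bc m k * vgen m k i := by
  have him : (i:ℕ) ≤ m/2 := Nat.lt_succ_iff.mp i.isLt
  have him' : (i:ℕ) ≤ m := le_trans him (Nat.div_le_self m 2)
  by_cases hk : k ≤ (i:ℕ)
  · by_cases hk1 : k + 1 ≤ (i:ℕ)
    · -- main case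
      have h2k : 2*(k+1) ≤ m := by
        have := Nat.le_trans hk1 him
        omega
      set a := m - 2*k with ha
      set t := (i:ℕ) - k with ht
      have ht1 : 1 ≤ t := by omega
      have hta : t ≤ a := by omega
      have ha2 : 2 ≤ a := by omega
      have e1 : m - 2*(k+1) = a - 2 := by omega
      have e2 : (i:ℕ) - (k+1) = t - 1 := by omega
      simp only [vgen, if_pos hk, if_pos hk1, e1, e2, Ac, Bc, ← ha]
      have hK := lemK a (t-1)
      rw [Nat.sub_add_cancel ht1] at hK
      have hKr : (t:ℝ) * ((a:ℝ) - (t:ℝ)) * (a.choose t : ℝ)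
          = (a:ℝ) * ((a:ℝ) - 1) * ((a-2).choose (t-1) : ℝ) := by
        have := congrArg (Nat.cast : ℕ → ℝ) hK
        push_cast [Nat.cast_sub hta, Nat.cast_sub (by omega : 1 ≤ a)] at this
        linarith [this]
      rw [← hKr]
      have hi : ((i:ℕ):ℝ) = (t:ℝ) + (k:ℝ) := by
        rw [ht]; push_cast [Nat.cast_sub hk]; ring
      have hm : (m:ℝ) = (a:ℝ) + 2*(k:ℝ) := by
        rw [ha]; push_cast [Nat.cast_sub (by omega : 2*k ≤ m)]; ring
      have hmk : ((k*(m-k):ℕ):ℝ) = (k:ℝ) * ((m:ℝ) - (k:ℝ)) := by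
        push_cast [Nat.cast_sub (by omega : k ≤ m)]; ring
      rw [hi, hm, hmk, hm]
      ring
    · -- i = k
      have hik : (i:ℕ) = k := by omega
      simp only [vgen, hik]
      rw [if_pos (le_refl k), if_neg (by omega : ¬ k+1 ≤ k)]
      simp only [Nat.sub_self, Nat.choose_zero_right, Nat.cast_one, mul_one, mul_zero,
        zero_add, Bc]
      push_cast [Nat.cast_sub (by omega : k ≤ m)]
      ring
  · have hk1 : ¬ (k + 1 ≤ (i:ℕ)) := by omega
    simp [vgen, if_neg hk, if_neg hk1]
    intro h; omega

noncomputable def dseq (m : ℕ) : ℕ → ℕ → ℝ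
  | 0, k => if k = 0 then 1 else 0
  | (j+1), 0 => 0
  | (j+1), (k+1) => Bc m (k+1) * dseq m j (k+1) + Ac m k * dseq m j k

lemma dseq_nonneg (m : ℕ) : ∀ j k, 0 ≤ dseq m j k := by
  intro j
  induction j with
  | zero => intro k; simp only [dseq]; split <;> norm_num
  | succ j ih =>
    intro k
    cases k with
    | zero => simp [dseq]
    | succ k =>
      simp only [dseq]
      have := Ac_nonneg m k
      have := Bc_nonneg m (k+1)
      have := ih k
      have := ih (k+1)
      positivity

lemma dseq_support (m : ℕ) : ∀ j k, j < k → dseq m j k = 0 := by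
  intro j
  induction j with
  | zero => intro k hk; simp only [dseq, if_neg (by omega : ¬ k = 0)]
  | succ j ih =>
    intro k hk
    cases k with
    | zero => omega
    | succ k =>
      simp only [dseq, ih k (by omega), ih (k+1) (by omega), mul_zero, add_zero]

lemma dseq_expand (m : ℕ) (i : Fin (m/2+1)) : ∀ j : ℕ,
    (((i:ℕ):ℝ) * ((m:ℝ) - ((i:ℕ):ℝ)))^j * (m.choose (i:ℕ) : ℝ)
      = ∑ k ∈ Finset.range (j+1), dseq m j k * vgen m k i := by
  intro j
  induction j with
  | zero =>
    simp [dseq, vgen]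
  | succ j ih =>
    have hx : (((i:ℕ):ℝ) * ((m:ℝ) - ((i:ℕ):ℝ)))^(j+1) * (m.choose (i:ℕ) : ℝ)
        = (((i:ℕ):ℝ) * ((m:ℝ) - ((i:ℕ):ℝ)))
          * ((((i:ℕ):ℝ) * ((m:ℝ) - ((i:ℕ):ℝ)))^j * (m.choose (i:ℕ) : ℝ)) := by ring
    rw [hx, ih, Finset.mul_sum]
    have hterm : ∀ k, (((i:ℕ):ℝ) * ((m:ℝ) - ((i:ℕ):ℝ))) * (dseq m j k * vgen m k i)
        = dseq m j k * Ac m k * vgen m (k+1) i + dseq m j k * Bc m k * vgen m k i := by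
      intro k
      have hs := step m k i
      calc (((i:ℕ):ℝ) * ((m:ℝ) - ((i:ℕ):ℝ))) * (dseq m j k * vgen m k i)
          = dseq m j k * (((i:ℕ):ℝ) * ((m:ℝ) - ((i:ℕ):ℝ)) * vgen m k i) := by ring
        _ = dseq m j k * (Ac m k * vgen m (k+1) i + Bc m k * vgen m k i) := by rw [hs]
        _ = dseq m j k * Ac m k * vgen m (k+1) i + dseq m j k * Bc m k * vgen m k i := by
            ring
    rw [Finset.sum_congr rfl (fun k _ => hterm k), Finset.sum_add_distrib]
    rw [Finset.sum_range_succ' (fun k => dseq m (j+1) k * vgen m k i) (j+1)]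
    have hB : ∑ k ∈ Finset.range (j+1), dseq m j k * Bc m k * vgen m k i
        = ∑ k ∈ Finset.range (j+1), Bc m (k+1) * dseq m j (k+1) * vgen m (k+1) i := by
      rw [Finset.sum_range_succ' (fun k => dseq m j k * Bc m k * vgen m k i) j,
        Finset.sum_range_succ (fun k => Bc m (k+1) * dseq m j (k+1) * vgen m (k+1) i) j]
      have h0 : Bc m 0 = 0 := by simp [Bc]
      have hj : dseq m j (j+1) = 0 := dseq_support m j (j+1) (by omega)
      rw [h0, hj]
      simp only [mul_zero, zero_mul, add_zero]
      exact Finset.sum_congr rfl (fun k _ => by ring)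
    rw [hB, ← Finset.sum_add_distrib]
    have hd0 : dseq m (j+1) 0 = 0 := rfl
    rw [hd0]
    simp only [zero_mul, add_zero]
    exact Finset.sum_congr rfl (fun k _ => by simp only [dseq]; ring)

lemma vgen_eq_zero {m k : ℕ} {i : Fin (m/2+1)} (h : (i:ℕ) < k) : vgen m k i = 0 :=
  if_neg (by omega)

lemma partial_mem (m : ℕ) (β : ℝ) (hβ : 0 ≤ β) (N : ℕ) :
    (fun i : Fin (m/2+1) => (m.choose (i:ℕ) : ℝ) *
        ∑ j ∈ Finset.range N,
          (β * ((i:ℕ):ℝ) * ((m:ℝ) - ((i:ℕ):ℝ)))^j / (Nat.factorial j : ℝ))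
      ∈ {w : Fin (m / 2 + 1) → ℝ |
          ∃ c : Fin (m / 2 + 1) → ℝ, (∀ k, 0 ≤ c k) ∧ w = ∑ k, c k • vgen m (k : ℕ)} := by
  classical
  set n := m/2 with hn
  set e : ℕ → ℝ := fun k => ∑ j ∈ Finset.range N,
    (β^j / (Nat.factorial j : ℝ)) * dseq m j k with he
  refine ⟨fun k => if (k:ℕ) < N then e (k:ℕ) else 0, ?_, ?_⟩
  · intro k
    show 0 ≤ if (k:ℕ) < N then e (k:ℕ) else 0
    split
    · apply Finset.sum_nonneg
      intro j _
      exact mul_nonneg (div_nonneg (pow_nonneg hβ j) (by positivity)) (dseq_nonneg m j _)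
    · exact le_refl 0
  · funext i
    have him : (i:ℕ) ≤ n := Nat.lt_succ_iff.mp i.isLt
    set M := max N (n+1) with hM
    set f : ℕ → ℝ := fun k => (if k < N then e k else 0) * vgen m k i with hf
    have lhs_eq : (m.choose (i:ℕ) : ℝ) *
        ∑ j ∈ Finset.range N,
          (β * ((i:ℕ):ℝ) * ((m:ℝ) - ((i:ℕ):ℝ)))^j / (Nat.factorial j : ℝ)
        = ∑ k ∈ Finset.range M, f k := by
      calc (m.choose (i:ℕ) : ℝ) *
            ∑ j ∈ Finset.range N,
              (β * ((i:ℕ):ℝ) * ((m:ℝ) - ((i:ℕ):ℝ)))^j / (Nat.factorial j : ℝ)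
          = ∑ j ∈ Finset.range N, (β^j / (Nat.factorial j : ℝ)) *
              ((((i:ℕ):ℝ) * ((m:ℝ) - ((i:ℕ):ℝ)))^j * (m.choose (i:ℕ) : ℝ)) := by
            rw [Finset.mul_sum]
            refine Finset.sum_congr rfl (fun j _ => ?_)
            have hp : (β * ((i:ℕ):ℝ) * ((m:ℝ) - ((i:ℕ):ℝ)))^j
                = β^j * ((((i:ℕ):ℝ) * ((m:ℝ) - ((i:ℕ):ℝ)))^j) := by
              rw [mul_assoc, mul_pow]
            rw [hp]
            ring
        _ = ∑ j ∈ Finset.range N, (β^j / (Nat.factorial j : ℝ)) *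
              (∑ k ∈ Finset.range (j+1), dseq m j k * vgen m k i) := by
            exact Finset.sum_congr rfl (fun j _ => by rw [dseq_expand m i j])
        _ = ∑ j ∈ Finset.range N, ∑ k ∈ Finset.range M,
              (β^j / (Nat.factorial j : ℝ)) * (dseq m j k * vgen m k i) := by
            refine Finset.sum_congr rfl (fun j hj => ?_)
            rw [Finset.mul_sum]
            refine Finset.sum_subset ?_ ?_
            · apply Finset.range_subset_range.2
              have := Finset.mem_range.mp hj
              omega
            · intro k _ hk
              have : j < k := by
                have := Finset.mem_range.not.mp hk
                omega
              rw [dseq_support m j k this]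
              ring
        _ = ∑ k ∈ Finset.range M, ∑ j ∈ Finset.range N,
              (β^j / (Nat.factorial j : ℝ)) * (dseq m j k * vgen m k i) := by
            exact Finset.sum_comm
        _ = ∑ k ∈ Finset.range M, f k := by
            refine Finset.sum_congr rfl (fun k hk => ?_)
            by_cases hkN : k < N
            · rw [hf]
              simp only [if_pos hkN, he]
              rw [Finset.sum_mul]
              exact Finset.sum_congr rfl (fun j _ => by ring)
            · rw [hf]
              simp only [if_neg hkN, zero_mul]
              apply Finset.sum_eq_zero
              intro j hj
              have hjk : j < k := by
                have := Finset.mem_range.mp hj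
                omega
              rw [dseq_support m j k hjk]
              ring
    have rhs_eq : (∑ k : Fin (n+1),
          (if (k:ℕ) < N then e (k:ℕ) else 0) • vgen m (k:ℕ)) i
        = ∑ k ∈ Finset.range M, f k := by
      rw [Finset.sum_apply]
      simp only [Pi.smul_apply, smul_eq_mul]
      rw [Fin.sum_univ_eq_sum_range (fun k => (if k < N then e k else 0) * vgen m k i) (n+1)]
      refine Finset.sum_subset ?_ ?_
      · exact Finset.range_subset_range.2 (le_max_right _ _)
      · intro k _ hk
        have hki : (i:ℕ) < k := by
          have := Finset.mem_range.not.mp hk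
          omega
        simp only [vgen_eq_zero hki, mul_zero]
    rw [lhs_eq, ← rhs_eq]

end Stmt11Aux

/-- Lemma 2 of the paper: for `β ≥ 0`, the vector `z` with entries
`z_i = C(m,i) · exp (β i (m - i))` lies in the closed convex cone generated by the
vectors `v_0, …, v_n`, i.e. in the topological closure of the set of nonnegative
linear combinations of the `v_k`. -/
theorem stmt_11 (m : ℕ) (β : ℝ) (hβ : 0 ≤ β) :
    (fun i : Fin (m / 2 + 1) =>
        (m.choose (i : ℕ) : ℝ) * Real.exp (β * (i : ℕ) * ((m : ℝ) - (i : ℕ)))) ∈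
      closure {w : Fin (m / 2 + 1) → ℝ |
        ∃ c : Fin (m / 2 + 1) → ℝ, (∀ k, 0 ≤ c k) ∧ w = ∑ k, c k • vgen m (k : ℕ)} := by
  have htend : Filter.Tendsto (fun N => (fun i : Fin (m/2+1) =>
      (m.choose (i:ℕ) : ℝ) * ∑ j ∈ Finset.range N,
        (β * ((i:ℕ):ℝ) * ((m:ℝ) - ((i:ℕ):ℝ)))^j / (Nat.factorial j : ℝ)))
      Filter.atTop (nhds (fun i : Fin (m / 2 + 1) =>
        (m.choose (i : ℕ) : ℝ) * Real.exp (β * (i : ℕ) * ((m : ℝ) - (i : ℕ))))) := by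
    rw [tendsto_pi_nhds]
    intro i
    have h : HasSum (fun j : ℕ =>
        (β * ((i:ℕ):ℝ) * ((m:ℝ) - ((i:ℕ):ℝ)))^j / (Nat.factorial j : ℝ))
        (Real.exp (β * ((i:ℕ):ℝ) * ((m:ℝ) - ((i:ℕ):ℝ)))) := by
      have hs := (NormedSpace.expSeries_div_summable (𝔸 := ℝ)
        (β * ((i:ℕ):ℝ) * ((m:ℝ) - ((i:ℕ):ℝ)))).hasSum
      rw [Real.exp_eq_exp_ℝ, NormedSpace.exp_eq_tsum_div]
      exact hs
    exact h.tendsto_sum_nat.const_mul _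
  exact mem_closure_of_tendsto htend
    (Filter.Eventually.of_forall (fun N => Stmt11Aux.partial_mem m β hβ N))
end
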